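/- Let k be a field, let A be a commutative k-algebra, let f₁, …, f_p be a regular sequence in A, and let g₁, …, g_p ∈ A be arbitrary elements. Then the quotient ring A[ε]/(f₁ + εg₁, …, f_p + εg_p) is flat as a module over the dual numbers k[ε]/(ε²). -/

import Mathlib

open DualNumber

/-- The canonical map `k[ε] → A[ε]` of rings of dual numbers induced by `k → A`,
sending `ε` to `ε`. -/
noncomputable def dualNumberBaseMap (k A : Type*) [CommSemiring k] [CommSemiring A]
    [Algebra k A] : DualNumber k →ₐ[k] DualNumber A :=
  DualNumber.lift
    ⟨(Algebra.ofId k (DualNumber A), ε), eps_mul_eps, fun _ => Commute.all _ _⟩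

section Helpers

open TrivSqZeroExt

variable {A : Type*} [CommRing A]

lemma StmtAux.eps_mul_inl' (a : A) : (ε * inl a : DualNumber A) = inr a := by
  rw [inr_eq_smul_eps]; ext <;> simp [smul_eq_mul, mul_comm]

lemma StmtAux.fst_gen (a b : A) : (inl a + ε * inl b : DualNumber A).fst = a := by
  rw [StmtAux.eps_mul_inl']; simp

lemma StmtAux.snd_gen (a b : A) : (inl a + ε * inl b : DualNumber A).snd = b := by
  rw [StmtAux.eps_mul_inl']; simp

lemma StmtAux.dual_decomp (x : DualNumber A) : x = inl x.fst + ε * inl x.snd := by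
  conv_lhs => rw [← inl_fst_add_inr_snd_eq x]
  rw [StmtAux.eps_mul_inl']

end Helpers
section Helpers2

open TrivSqZeroExt RingTheory.Sequence

namespace StmtAux

variable {A : Type*} [CommRing A]

lemma key_lemma :
    ∀ (n : ℕ) (f : Fin n → A), IsWeaklyRegular A (List.ofFn f) →
    ∀ (g c : Fin n → A), (∑ i, c i * f i) = 0 →
      (∑ i, c i * g i) ∈ Ideal.span (Set.range f) := by
  intro n
  induction n with
  | zero => intro f _ g c _; simp
  | succ n ih =>
    intro f hf g c hc
    set f' : Fin n → A := fun i => f i.castSucc with hf'def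
    set F' : Ideal A := Ideal.span (Set.range f') with hF'def
    have hsub : Set.range f' ⊆ Set.range f := by
      rintro _ ⟨i, rfl⟩; exact ⟨i.castSucc, rfl⟩
    have hle : F' ≤ Ideal.span (Set.range f) := Ideal.span_mono hsub
    have hsplit : List.ofFn f = (List.ofFn f') ++ [f (Fin.last n)] := by
      rw [List.ofFn_succ', List.concat_eq_append]
    have hofList : Ideal.ofList (List.ofFn f') = F' := by
      show Ideal.span _ = _
      rw [hF'def]; congr 1; ext x; simp [List.mem_ofFn]
    rw [hsplit, isWeaklyRegular_append_iff, hofList, smul_eq_mul, Ideal.mul_top,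
      isWeaklyRegular_singleton_iff] at hf
    obtain ⟨hf1, hf2⟩ := hf
    have hc2 := hc
    rw [Fin.sum_univ_castSucc] at hc2
    have h1 : c (Fin.last n) * f (Fin.last n) ∈ F' := by
      have e : c (Fin.last n) * f (Fin.last n) = -∑ i : Fin n, c i.castSucc * f' i := by
        linear_combination hc2
      rw [e]
      exact neg_mem (Ideal.sum_mem _ fun i _ =>
        Ideal.mul_mem_left _ _ (Ideal.subset_span ⟨i, rfl⟩))
    have h2 : c (Fin.last n) ∈ F' := by
      rw [← Submodule.Quotient.mk_eq_zero (p := (F' : Submodule A A))]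
      apply hf2
      show f (Fin.last n) • Submodule.Quotient.mk (c (Fin.last n)) =
        f (Fin.last n) • (0 : A ⧸ (F' : Submodule A A))
      rw [smul_zero, ← Submodule.Quotient.mk_smul, smul_eq_mul,
        Submodule.Quotient.mk_eq_zero]
      rwa [mul_comm]
    obtain ⟨lam, hlam⟩ := (Submodule.mem_span_range_iff_exists_fun A).mp h2
    simp only [smul_eq_mul] at hlam
    set c' : Fin n → A := fun i => c i.castSucc + lam i * f (Fin.last n) with hc'def
    have hc' : ∑ i, c' i * f' i = 0 := by
      have e1 : ∑ i, c' i * f' i =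
          (∑ i : Fin n, c i.castSucc * f' i) + (∑ i, lam i * f' i) * f (Fin.last n) := by
        rw [Finset.sum_mul, ← Finset.sum_add_distrib]
        exact Finset.sum_congr rfl fun i _ => by ring
      rw [e1, hlam]
      linear_combination hc2
    have hmem : ∑ i, c' i * g i.castSucc ∈ F' := ih f' hf1 (fun i => g i.castSucc) c' hc'
    rw [Fin.sum_univ_castSucc]
    have key_eq : ∑ i : Fin n, c i.castSucc * g i.castSucc =
        ∑ i, c' i * g i.castSucc - (∑ i, lam i * g i.castSucc) * f (Fin.last n) := by
      rw [eq_sub_iff_add_eq, Finset.sum_mul, ← Finset.sum_add_distrib]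
      exact Finset.sum_congr rfl fun i _ => by ring
    rw [key_eq, ← hlam]
    refine Ideal.add_mem _ (Ideal.sub_mem _ (hle hmem)
      (Ideal.mul_mem_left _ _ (Ideal.subset_span ⟨Fin.last n, rfl⟩)))
      (Ideal.mul_mem_right _ _ (hle ?_))
    exact Ideal.sum_mem _ fun i _ => Ideal.mul_mem_left _ _ (Ideal.subset_span ⟨i, rfl⟩)

variable {p : ℕ} (f g : Fin p → A)

lemma core_span (x : DualNumber A)
    (hx : x ∈ Ideal.span (Set.range fun i => (inl (f i) + ε * inl (g i) : DualNumber A))) :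
    ∃ c : Fin p → A, x.fst = ∑ i, c i * f i ∧
      x.snd - ∑ i, c i * g i ∈ Ideal.span (Set.range f) := by
  induction hx using Submodule.span_induction with
  | mem x hx =>
    obtain ⟨i, rfl⟩ := hx
    refine ⟨Pi.single i 1, ?_, ?_⟩
    · simp [fst_gen, Pi.single_apply, ite_mul]
    · simp [snd_gen, Pi.single_apply, ite_mul]
  | zero => exact ⟨0, by simp, by simp⟩
  | add x y hx hy ihx ihy =>
    obtain ⟨c, h1, h2⟩ := ihx
    obtain ⟨d, h3, h4⟩ := ihy
    refine ⟨c + d, ?_, ?_⟩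
    · simp only [fst_add, h1, h3, Pi.add_apply, add_mul, Finset.sum_add_distrib]
    · have : (x + y).snd - ∑ i, (c + d) i * g i =
        (x.snd - ∑ i, c i * g i) + (y.snd - ∑ i, d i * g i) := by
        simp only [snd_add, Pi.add_apply, add_mul, Finset.sum_add_distrib]; ring
      rw [this]; exact Ideal.add_mem _ h2 h4
  | smul z x hx ihx =>
    obtain ⟨c, h1, h2⟩ := ihx
    refine ⟨fun i => z.fst * c i, ?_, ?_⟩
    · show (z * x).fst = _
      rw [fst_mul, h1, Finset.mul_sum]
      exact Finset.sum_congr rfl fun i _ => by ring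
    · show (z * x).snd - _ ∈ _
      have hsnd : (z * x).snd = z.fst * x.snd + x.fst * z.snd := by
        simp [smul_eq_mul, mul_comm]
      have hS : ∑ i, z.fst * c i * g i = z.fst * ∑ i, c i * g i := by
        rw [Finset.mul_sum]; exact Finset.sum_congr rfl fun i _ => by ring
      have : (z * x).snd - ∑ i, z.fst * c i * g i =
          z.fst * (x.snd - ∑ i, c i * g i) + z.snd * x.fst := by
        rw [hsnd, hS]; ring
      rw [this]
      refine Ideal.add_mem _ (Ideal.mul_mem_left _ _ h2) (Ideal.mul_mem_left _ _ ?_)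
      rw [h1]
      exact Ideal.sum_mem _ fun i _ => Ideal.mul_mem_left _ _ (Ideal.subset_span ⟨i, rfl⟩)

lemma mem_span_gen_of_eps_mul {t : A} (ht : t ∈ Ideal.span (Set.range f)) :
    (ε * inl t : DualNumber A) ∈
      Ideal.span (Set.range fun i => (inl (f i) + ε * inl (g i) : DualNumber A)) := by
  obtain ⟨c, hc⟩ := (Submodule.mem_span_range_iff_exists_fun A).mp ht
  simp only [smul_eq_mul] at hc
  have : (ε * inl t : DualNumber A) = ∑ i, (ε * inl (c i)) * (inl (f i) + ε * inl (g i)) := by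
    ext
    · simp [fst_sum]
    · rw [← hc]
      simp [snd_sum, smul_eq_mul, Finset.mul_sum, mul_comm]
  rw [this]
  exact Ideal.sum_mem _ fun i _ => Ideal.mul_mem_left _ _ (Ideal.subset_span ⟨i, rfl⟩)

lemma exists_eps_partner {t : A} (ht : t ∈ Ideal.span (Set.range f)) :
    ∃ u : A, (inl t + ε * inl u : DualNumber A) ∈
      Ideal.span (Set.range fun i => (inl (f i) + ε * inl (g i) : DualNumber A)) := by
  obtain ⟨c, hc⟩ := (Submodule.mem_span_range_iff_exists_fun A).mp ht
  simp only [smul_eq_mul] at hc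
  refine ⟨∑ i, c i * g i, ?_⟩
  have : (inl t + ε * inl (∑ i, c i * g i) : DualNumber A) =
      ∑ i, inl (c i) * (inl (f i) + ε * inl (g i)) := by
    ext
    · rw [← hc]; simp [fst_sum, fst_gen]
    · simp [snd_sum, snd_gen, smul_eq_mul, mul_comm]
  rw [this]
  exact Ideal.sum_mem _ fun i _ => Ideal.mul_mem_left _ _ (Ideal.subset_span ⟨i, rfl⟩)

end StmtAux

end Helpers2
section Main

open TrivSqZeroExt

lemma StmtAux.inl_sub' {A : Type*} [CommRing A] (a b : A) :
    (inl (a - b) : DualNumber A) = inl a - inl b := by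
  ext <;> simp

set_option maxHeartbeats 1000000 in
set_option synthInstance.maxHeartbeats 400000 in
theorem stmt2 (k : Type*) [Field k] (A : Type*) [CommRing A] [Algebra k A]
    (p : ℕ) (f g : Fin p → A)
    (hreg : RingTheory.Sequence.IsRegular A (List.ofFn f))
    (I : Ideal (DualNumber A))
    (hI : I = Ideal.span (Set.range fun i =>
      algebraMap A (DualNumber A) (f i) + ε * algebraMap A (DualNumber A) (g i))) :
    letI : Module (DualNumber k) (DualNumber A ⧸ I) :=
      Module.compHom _ ((Ideal.Quotient.mk I).comp (dualNumberBaseMap k A).toRingHom)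
    Module.Flat (DualNumber k) (DualNumber A ⧸ I) := by
  letI inst : Module (DualNumber k) (DualNumber A ⧸ I) :=
    Module.compHom _ ((Ideal.Quotient.mk I).comp (dualNumberBaseMap k A).toRingHom)
  show Module.Flat (DualNumber k) (DualNumber A ⧸ I)
  classical
  have halg : I = Ideal.span (Set.range fun i =>
      (inl (f i) + ε * inl (g i) : DualNumber A)) := by
    rw [hI]
    simp only [TrivSqZeroExt.algebraMap_eq_inl]
  set F : Ideal A := Ideal.span (Set.range f) with hFdef
  have hmk_surj : LinearMap.range (Ideal.Quotient.mkₐ k F).toLinearMap = ⊤ :=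
    LinearMap.range_eq_top.mpr fun y => by
      obtain ⟨x, hx⟩ := Ideal.Quotient.mk_surjective y; exact ⟨x, hx⟩
  obtain ⟨s, hs⟩ := LinearMap.exists_rightInverse_of_surjective
    (Ideal.Quotient.mkₐ k F).toLinearMap hmk_surj
  have hs' : ∀ v : A ⧸ F, Ideal.Quotient.mk F (s v) = v := by
    intro v
    have := LinearMap.congr_fun hs v
    simpa [Ideal.Quotient.mkₐ_eq_mk] using this
  have hsmul : ∀ (z : DualNumber k) (x : DualNumber A ⧸ I),
      z • x = Ideal.Quotient.mk I (dualNumberBaseMap k A z) * x := fun _ _ => rfl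
  haveI htower : IsScalarTower k (DualNumber k) (DualNumber A ⧸ I) := by
    constructor
    intro c z x
    rw [hsmul, hsmul, map_smul]
    have h1 : Ideal.Quotient.mk I (c • (dualNumberBaseMap k A z))
        = c • Ideal.Quotient.mk I (dualNumberBaseMap k A z) := by
      rw [← Ideal.Quotient.mkₐ_eq_mk k, map_smul]
    rw [h1, smul_mul_assoc]
  let l : (A ⧸ F) →ₗ[k] DualNumber A ⧸ I :=
    (Ideal.Quotient.mkₐ k I).toLinearMap ∘ₗ
      ((Algebra.linearMap A (DualNumber A)).restrictScalars k) ∘ₗ s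
  have hl : ∀ v, l v = Ideal.Quotient.mk I (inl (s v)) := by
    intro v
    simp [l, Ideal.Quotient.mkₐ_eq_mk, TrivSqZeroExt.algebraMap_eq_inl']
  let Φ : TensorProduct k (DualNumber k) (A ⧸ F) →ₗ[DualNumber k] DualNumber A ⧸ I :=
    l.liftBaseChange (DualNumber k)
  have heps : dualNumberBaseMap k A ε = ε := DualNumber.lift_apply_eps _
  have hΦ1 : ∀ v, Φ ((1 : DualNumber k) ⊗ₜ[k] v) = Ideal.Quotient.mk I (inl (s v)) := by
    intro v
    rw [show Φ ((1 : DualNumber k) ⊗ₜ[k] v) = (1 : DualNumber k) • l v from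
      LinearMap.liftBaseChange_tmul _ _ _ _, one_smul, hl]
  have hΦε : ∀ v, Φ ((ε : DualNumber k) ⊗ₜ[k] v)
      = Ideal.Quotient.mk I (ε * inl (s v)) := by
    intro v
    rw [show Φ ((ε : DualNumber k) ⊗ₜ[k] v) = (ε : DualNumber k) • l v from
      LinearMap.liftBaseChange_tmul _ _ _ _, hl, hsmul, heps, ← map_mul]
  have hmemF : ∀ u : A, u - s (Ideal.Quotient.mk F u) ∈ F := by
    intro u
    rw [← Ideal.Quotient.eq_zero_iff_mem, map_sub, hs', sub_self]
  have hkey3 : ∀ u : A, Ideal.Quotient.mk I (ε * inl u)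
      = Φ ((ε : DualNumber k) ⊗ₜ[k] (Ideal.Quotient.mk F u)) := by
    intro u
    rw [hΦε, Ideal.Quotient.mk_eq_mk_iff_sub_mem]
    have : ε * inl u - ε * inl (s (Ideal.Quotient.mk F u))
        = ε * inl (u - s (Ideal.Quotient.mk F u)) := by
      rw [StmtAux.inl_sub', mul_sub]
    rw [this, halg]
    exact StmtAux.mem_span_gen_of_eps_mul f g (hmemF u)
  have hsur : Function.Surjective Φ := by
    intro y
    obtain ⟨x, rfl⟩ := Ideal.Quotient.mk_surjective y
    rw [StmtAux.dual_decomp x, map_add]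
    set a := x.fst
    set b := x.snd
    obtain ⟨u, hu⟩ := StmtAux.exists_eps_partner f g (hmemF a)
    refine ⟨((1 : DualNumber k) ⊗ₜ[k] (Ideal.Quotient.mk F a)
      - (ε : DualNumber k) ⊗ₜ[k] (Ideal.Quotient.mk F u))
      + (ε : DualNumber k) ⊗ₜ[k] (Ideal.Quotient.mk F b), ?_⟩
    rw [map_add, map_sub, hΦ1, ← hkey3, ← hkey3]
    congr 1
    have h0 : Ideal.Quotient.mk I (inl (a - s (Ideal.Quotient.mk F a)) + ε * inl u) = 0 :=
      Ideal.Quotient.eq_zero_iff_mem.mpr (by rw [halg]; exact hu)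
    have h1 : Ideal.Quotient.mk I (inl a)
        - (Ideal.Quotient.mk I (inl (s (Ideal.Quotient.mk F a)))
          - Ideal.Quotient.mk I (ε * inl u)) = 0 := by
      rw [← map_sub, ← map_sub]
      rw [show (inl a : DualNumber A) - (inl (s (Ideal.Quotient.mk F a)) - ε * inl u)
        = inl (a - s (Ideal.Quotient.mk F a)) + ε * inl u by rw [StmtAux.inl_sub']; ring]
      exact h0
    have := sub_eq_zero.mp h1
    exact this.symm
  have hdecomp : ∀ w : TensorProduct k (DualNumber k) (A ⧸ F),
      ∃ u v : A ⧸ F, w = (1 : DualNumber k) ⊗ₜ[k] u + (ε : DualNumber k) ⊗ₜ[k] v := by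
    intro w
    induction w using TensorProduct.induction_on with
    | zero => exact ⟨0, 0, by simp⟩
    | tmul z m =>
      refine ⟨z.fst • m, z.snd • m, ?_⟩
      have hz : z = z.fst • (1 : DualNumber k) + z.snd • (ε : DualNumber k) := by
        ext <;> simp
      rw [← TensorProduct.smul_tmul, ← TensorProduct.smul_tmul, ← TensorProduct.add_tmul, ← hz]
    | add w1 w2 ih1 ih2 =>
      obtain ⟨u1, v1, rfl⟩ := ih1
      obtain ⟨u2, v2, rfl⟩ := ih2
      refine ⟨u1 + u2, v1 + v2, ?_⟩
      rw [TensorProduct.tmul_add, TensorProduct.tmul_add]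
      abel
  have hinj : Function.Injective Φ := by
    intro w w' hww
    have h0 : Φ (w - w') = 0 := by rw [map_sub, hww, sub_self]
    obtain ⟨u, v, heq⟩ := hdecomp (w - w')
    rw [heq, map_add, hΦ1, hΦε, ← map_add] at h0
    have hxI : (inl (s u) + ε * inl (s v) : DualNumber A) ∈ I :=
      Ideal.Quotient.eq_zero_iff_mem.mp h0
    rw [halg] at hxI
    obtain ⟨c, hc1, hc2⟩ := StmtAux.core_span f g _ hxI
    rw [StmtAux.fst_gen] at hc1
    rw [StmtAux.snd_gen] at hc2
    have hsuF : s u ∈ F := by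
      rw [hc1]
      exact Ideal.sum_mem _ fun i _ => Ideal.mul_mem_left _ _ (Ideal.subset_span ⟨i, rfl⟩)
    have hu0 : u = 0 := by
      rw [← hs' u]
      exact Ideal.Quotient.eq_zero_iff_mem.mpr hsuF
    have hsu : s u = 0 := by rw [hu0, map_zero]
    have hf0 : ∑ i, c i * f i = 0 := by rw [← hc1, hsu]
    have hgF : ∑ i, c i * g i ∈ F :=
      StmtAux.key_lemma p f hreg.toIsWeaklyRegular g c hf0
    have hsv : s v ∈ F := by
      have h2 := Ideal.add_mem _ hc2 hgF
      simpa using h2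
    have hv0 : v = 0 := by
      rw [← hs' v]
      exact Ideal.Quotient.eq_zero_iff_mem.mpr hsv
    have hw0 : w - w' = 0 := by rw [heq, hu0, hv0]; simp
    exact sub_eq_zero.mp hw0
  haveI hflatT : Module.Flat (DualNumber k) (TensorProduct k (DualNumber k) (A ⧸ F)) :=
    Module.Flat.baseChange k (DualNumber k) (A ⧸ F)
  exact Module.Flat.of_linearEquiv (LinearEquiv.ofBijective Φ ⟨hinj, hsur⟩).symm

end Main
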